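/- Let (X1, X2, X3, X4) be a random vector on finite sets whose entropy function equals a·r1 + b·r2 with a, b ≥ 0, where r1 is the rank function of the uniform matroid U_{2,4} on {1,2,3,4} and r2 is the rank function of the matroid U^{123}_{2,3} (which restricts to U_{2,3} on {1,2,3} with 4 a loop). Then X1, X2, X3 are each uniformly distributed, |𝒳1| = |𝒳2| = |𝒳3|, and a + b = log|𝒳1|. -/

import Mathlib

open Finset
open scoped BigOperators
noncomputable section

/-- Probability that the `A`-marginal of the random vector with joint pmf `p`
takes the same value as on `x`. -/
def margProb {n : ℕ} {m : Fin n → ℕ} (p : (∀ i, Fin (m i)) → ℝ)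
    (A : Finset (Fin n)) (x : ∀ i, Fin (m i)) : ℝ :=
  ∑ y : ∀ i, Fin (m i), if ∀ i ∈ A, y i = x i then p y else 0

/-- The Shannon entropy `H(X_A)` of the subvector indexed by `A`, for the random
vector with joint pmf `p`. -/
def jointEntropy {n : ℕ} {m : Fin n → ℕ} (p : (∀ i, Fin (m i)) → ℝ)
    (A : Finset (Fin n)) : ℝ :=
  -∑ x : ∀ i, Fin (m i), p x * Real.log (margProb p A x)

/-- `p` is a probability mass function. -/
def IsPMF {α : Type*} [Fintype α] (p : α → ℝ) : Prop :=
  (∀ x, 0 ≤ p x) ∧ ∑ x, p x = 1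

/-- `h` is an entropy function of degree `n`: it arises as `A ↦ H(X_A)` for a
random vector `(X_1, …, X_n)` on finite sets. -/
def IsEntropyFunc (n : ℕ) (h : Finset (Fin n) → ℝ) : Prop :=
  ∃ (m : Fin n → ℕ) (p : (∀ i, Fin (m i)) → ℝ), IsPMF p ∧ ∀ A, jointEntropy p A = h A

/-- Marginal probability of the single coordinate `i` taking value `x`. -/
def marg1 {n : ℕ} {m : Fin n → ℕ} (p : (∀ i, Fin (m i)) → ℝ)
    (i : Fin n) (x : Fin (m i)) : ℝ :=
  ∑ y : ∀ j, Fin (m j), if y i = x then p y else 0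

/-- Marginal probability of the pair of coordinates `(i, j)` taking values `(x, y)`. -/
def marg2 {n : ℕ} {m : Fin n → ℕ} (p : (∀ i, Fin (m i)) → ℝ)
    (i j : Fin n) (x : Fin (m i)) (y : Fin (m j)) : ℝ :=
  ∑ z : ∀ k, Fin (m k), if z i = x ∧ z j = y then p z else 0

/-- Rank function of the uniform matroid `U_{2,4}` on `{1,2,3,4}`. -/
def r24 (A : Finset (Fin 4)) : ℝ := min 2 (A.card : ℝ)

/-- Rank function of the matroid `U^{123}_{2,3}`: a `U_{2,3}` on `{1,2,3}` with the
fourth element a loop (indices `0,1,2` and loop `3`). -/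
def rU23_123 (A : Finset (Fin 4)) : ℝ := min 2 ((A ∩ ({0, 1, 2} : Finset (Fin 4))).card : ℝ)

/-! ### Auxiliary lemmas -/

/-- Gibbs' inequality, equality case: if a pmf `q` has the same cross-entropy against a
positive pmf `w` as its own entropy, then `q = w`. -/
lemma gibbs_eq {α : Type*} [Fintype α] (q w : α → ℝ) (hq : ∀ x, 0 ≤ q x)
    (hw : ∀ x, 0 < w x) (hsq : ∑ x, q x = 1) (hsw : ∑ x, w x = 1)
    (heq : ∑ x, q x * Real.log (q x) = ∑ x, q x * Real.log (w x)) :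
    ∀ x, q x = w x := by
  set t : α → ℝ := fun x => w x - q x - q x * Real.log (w x) + q x * Real.log (q x) with ht
  have key : ∀ x, 0 < q x → q x ≠ w x → 0 < t x := by
    intro x h hne
    have hwq : 0 < w x / q x := div_pos (hw x) h
    have hne1 : w x / q x ≠ 1 := by
      intro h1
      exact hne ((div_eq_one_iff_eq h.ne').mp h1).symm
    have hlog := Real.log_lt_sub_one_of_pos hwq hne1
    have hld : Real.log (w x / q x) = Real.log (w x) - Real.log (q x) :=
      Real.log_div (hw x).ne' h.ne'
    have e1 : q x * (w x / q x - 1) = w x - q x := by field_simp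
    have e2 : q x * Real.log (w x / q x) = q x * Real.log (w x) - q x * Real.log (q x) := by
      rw [hld]; ring
    have e3 := mul_lt_mul_of_pos_left hlog h
    simp only [ht]
    linarith
  have htn : ∀ x, 0 ≤ t x := by
    intro x
    rcases eq_or_lt_of_le (hq x) with h | h
    · simp [ht, ← h]
      linarith [hw x]
    · rcases eq_or_ne (q x) (w x) with he | hne
      · simp [ht, he]
      · exact (key x h hne).le
  have hts : ∑ x, t x = 0 := by
    have h1 : ∑ x, t x = (∑ x, w x) - (∑ x, q x) - (∑ x, q x * Real.log (w x))
        + ∑ x, q x * Real.log (q x) := by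
      simp only [ht]
      rw [Finset.sum_add_distrib, Finset.sum_sub_distrib, Finset.sum_sub_distrib]
    rw [h1, hsq, hsw, ← heq]; ring
  have hz : ∀ x ∈ univ, t x = 0 :=
    (Finset.sum_eq_zero_iff_of_nonneg (fun x _ => htn x)).mp hts
  intro x
  have h0 := hz x (mem_univ x)
  rcases eq_or_lt_of_le (hq x) with h | h
  · exfalso
    have : t x = w x := by simp [ht, ← h]
    linarith [hw x]
  · by_contra hne
    exact absurd h0 (key x h hne).ne'

section Aux
variable {n : ℕ} {m : Fin n → ℕ} (p : (∀ i, Fin (m i)) → ℝ)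

lemma marg1_nonneg (hp : ∀ x, 0 ≤ p x) (i : Fin n) (v : Fin (m i)) :
    0 ≤ marg1 p i v :=
  Finset.sum_nonneg fun y _ => by split_ifs <;> [exact hp y; exact le_rfl]

lemma marg2_nonneg (hp : ∀ x, 0 ≤ p x) (i j : Fin n) (v : Fin (m i)) (w : Fin (m j)) :
    0 ≤ marg2 p i j v w :=
  Finset.sum_nonneg fun y _ => by split_ifs <;> [exact hp y; exact le_rfl]

lemma sum_marg1 (hp : ∑ x, p x = 1) (i : Fin n) : ∑ v, marg1 p i v = 1 := by
  rw [← hp]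
  unfold marg1
  rw [Finset.sum_comm]
  refine Finset.sum_congr rfl fun y _ => ?_
  simp [Finset.sum_ite_eq']

lemma sum_marg2_right (i j : Fin n) (v : Fin (m i)) :
    ∑ w, marg2 p i j v w = marg1 p i v := by
  unfold marg1 marg2
  rw [Finset.sum_comm]
  refine Finset.sum_congr rfl fun z _ => ?_
  by_cases h : z i = v
  · simp [h, Finset.sum_ite_eq']
  · simp [h]

lemma sum_marg2_left (i j : Fin n) (w : Fin (m j)) :
    ∑ v, marg2 p i j v w = marg1 p j w := by
  unfold marg1 marg2
  rw [Finset.sum_comm]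
  refine Finset.sum_congr rfl fun z _ => ?_
  by_cases h : z j = w
  · simp [h, Finset.sum_ite_eq']
  · simp [h]

lemma margProb_single (i : Fin n) (x : ∀ j, Fin (m j)) :
    margProb p {i} x = marg1 p i (x i) := by
  unfold margProb marg1
  refine Finset.sum_congr rfl fun y _ => ?_
  simp

lemma margProb_pair (i j : Fin n) (x : ∀ k, Fin (m k)) :
    margProb p ({i, j} : Finset (Fin n)) x = marg2 p i j (x i) (x j) := by
  unfold margProb marg2
  refine Finset.sum_congr rfl fun y _ => ?_
  simp [Finset.forall_mem_insert]

lemma jointEntropy_single (i : Fin n) :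
    jointEntropy p {i} = -∑ v, marg1 p i v * Real.log (marg1 p i v) := by
  unfold jointEntropy
  congr 1
  calc ∑ x, p x * Real.log (margProb p {i} x)
      = ∑ x, p x * Real.log (marg1 p i (x i)) := by
        refine Finset.sum_congr rfl fun x _ => ?_
        rw [margProb_single]
    _ = ∑ x, ∑ v, (if x i = v then p x * Real.log (marg1 p i v) else 0) := by
        refine Finset.sum_congr rfl fun x _ => ?_
        simp [Finset.sum_ite_eq]
    _ = ∑ v, ∑ x, (if x i = v then p x * Real.log (marg1 p i v) else 0) :=
        Finset.sum_comm
    _ = ∑ v, marg1 p i v * Real.log (marg1 p i v) := by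
        refine Finset.sum_congr rfl fun v _ => ?_
        rw [marg1, Finset.sum_mul]
        refine Finset.sum_congr rfl fun x _ => ?_
        split_ifs <;> simp

lemma jointEntropy_pair (i j : Fin n) :
    jointEntropy p {i, j} = -∑ v, ∑ w, marg2 p i j v w * Real.log (marg2 p i j v w) := by
  unfold jointEntropy
  congr 1
  calc ∑ x, p x * Real.log (margProb p {i, j} x)
      = ∑ x, p x * Real.log (marg2 p i j (x i) (x j)) := by
        refine Finset.sum_congr rfl fun x _ => ?_
        rw [margProb_pair]
    _ = ∑ x, ∑ v, ∑ w, (if x i = v ∧ x j = w then p x * Real.log (marg2 p i j v w) else 0) := by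
        refine Finset.sum_congr rfl fun x _ => ?_
        have h1 : ∀ v, ∑ w, (if x i = v ∧ x j = w then p x * Real.log (marg2 p i j v w) else 0)
            = if x i = v then p x * Real.log (marg2 p i j v (x j)) else 0 := by
          intro v
          by_cases h : x i = v
          · simp [h, Finset.sum_ite_eq]
          · simp [h]
        simp [h1, Finset.sum_ite_eq]
    _ = ∑ v, ∑ x, ∑ w, (if x i = v ∧ x j = w then p x * Real.log (marg2 p i j v w) else 0) :=
        Finset.sum_comm
    _ = ∑ v, ∑ w, ∑ x, (if x i = v ∧ x j = w then p x * Real.log (marg2 p i j v w) else 0) :=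
        Finset.sum_congr rfl fun v _ => Finset.sum_comm
    _ = ∑ v, ∑ w, marg2 p i j v w * Real.log (marg2 p i j v w) := by
        refine Finset.sum_congr rfl fun v _ => Finset.sum_congr rfl fun w _ => ?_
        rw [marg2, Finset.sum_mul]
        refine Finset.sum_congr rfl fun x _ => ?_
        split_ifs <;> simp

lemma margProb_nonneg (hp : ∀ x, 0 ≤ p x) (A : Finset (Fin n)) (x : ∀ i, Fin (m i)) :
    0 ≤ margProb p A x :=
  Finset.sum_nonneg fun y _ => by split_ifs <;> [exact hp y; exact le_rfl]

lemma self_le_margProb (hp : ∀ x, 0 ≤ p x) (A : Finset (Fin n)) (x : ∀ i, Fin (m i)) :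
    p x ≤ margProb p A x := by
  have h := Finset.single_le_sum (f := fun y => if ∀ i ∈ A, y i = x i then p y else 0)
    (fun y _ => by
      show 0 ≤ if ∀ i ∈ A, y i = x i then p y else 0
      by_cases h : ∀ i ∈ A, y i = x i
      · rw [if_pos h]; exact hp y
      · rw [if_neg h]) (Finset.mem_univ x)
  simpa [margProb] using h

lemma margProb_mono (hp : ∀ x, 0 ≤ p x) {A B : Finset (Fin n)} (hAB : A ⊆ B)
    (x : ∀ i, Fin (m i)) : margProb p B x ≤ margProb p A x := by
  refine Finset.sum_le_sum fun y _ => ?_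
  by_cases h : ∀ i ∈ B, y i = x i
  · rw [if_pos h, if_pos fun i hi => h i (hAB hi)]
  · rw [if_neg h]
    split_ifs <;> [exact hp y; exact le_rfl]

/-- From `H(B) = H(A)` with `A ⊆ B`: on the support, the marginals agree. -/
lemma cond_eq (hp : ∀ x, 0 ≤ p x) {A B : Finset (Fin n)} (hAB : A ⊆ B)
    (hH : jointEntropy p B = jointEntropy p A) :
    ∀ x, 0 < p x → margProb p B x = margProb p A x := by
  set d : (∀ i, Fin (m i)) → ℝ :=
    fun x => p x * (Real.log (margProb p A x) - Real.log (margProb p B x)) with hd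
  have hdn : ∀ x, 0 ≤ d x := by
    intro x
    rcases eq_or_lt_of_le (hp x) with h | h
    · simp [hd, ← h]
    · have h1 : 0 < margProb p B x := lt_of_lt_of_le h (self_le_margProb p hp B x)
      have h2 := margProb_mono p hp hAB x
      have := Real.log_le_log h1 h2
      have h3 : 0 ≤ Real.log (margProb p A x) - Real.log (margProb p B x) := by linarith
      exact mul_nonneg h.le h3
  have hds : ∑ x, d x = 0 := by
    have h1 : ∑ x, d x = (∑ x, p x * Real.log (margProb p A x))
        - ∑ x, p x * Real.log (margProb p B x) := by
      rw [← Finset.sum_sub_distrib]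
      exact Finset.sum_congr rfl fun x _ => by ring
    have h2 : jointEntropy p B - jointEntropy p A
        = (∑ x, p x * Real.log (margProb p A x))
          - ∑ x, p x * Real.log (margProb p B x) := by
      unfold jointEntropy; ring
    rw [h1, ← h2, hH, sub_self]
  have hz := (Finset.sum_eq_zero_iff_of_nonneg (fun x _ => hdn x)).mp hds
  intro x hx
  have h0 := hz x (mem_univ x)
  have h1 : 0 < margProb p B x := lt_of_lt_of_le hx (self_le_margProb p hp B x)
  have h2 : 0 < margProb p A x := lt_of_lt_of_le h1 (margProb_mono p hp hAB x)
  have h3 : Real.log (margProb p A x) = Real.log (margProb p B x) := by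
    rcases mul_eq_zero.mp h0 with h | h
    · exact absurd h hx.ne'
    · linarith
  exact le_antisymm (margProb_mono p hp hAB x)
    ((Real.log_le_log_iff h2 h1).mp h3.le)

/-- Determinism: if the marginals on `A` and on `B ⊇ A` agree on the support, then any two
support points agreeing on `A` agree on `B`. -/
lemma support_det (hp : ∀ x, 0 ≤ p x) {A B : Finset (Fin n)} (hAB : A ⊆ B)
    (heq : ∀ x, 0 < p x → margProb p B x = margProb p A x) :
    ∀ x z, 0 < p x → 0 < p z → (∀ i ∈ A, z i = x i) → ∀ i ∈ B, z i = x i := by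
  intro x z hx hz hA
  have h := heq x hx
  have hpt : ∀ y ∈ (univ : Finset (∀ i, Fin (m i))),
      (if ∀ i ∈ B, y i = x i then p y else 0) ≤ (if ∀ i ∈ A, y i = x i then p y else 0) := by
    intro y _
    by_cases hB : ∀ i ∈ B, y i = x i
    · rw [if_pos hB, if_pos fun i hi => hB i (hAB hi)]
    · rw [if_neg hB]; split_ifs <;> [exact hp y; exact le_rfl]
  have hall := (Finset.sum_eq_sum_iff_of_le hpt).mp h
  have hzz := hall z (mem_univ z)
  rw [if_pos hA] at hzz
  by_contra hB
  rw [if_neg ?_] at hzz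
  · exact absurd hzz hz.ne
  · intro hc; exact hB hc

/-- Equality `H(X_i, X_j) = H(X_i) + H(X_j)` forces independence of the marginals. -/
lemma indep (hp : ∀ x, 0 ≤ p x) (hps : ∑ x, p x = 1)
    (hpos : ∀ (i : Fin n) (x : Fin (m i)), 0 < marg1 p i x) (i j : Fin n)
    (hH : jointEntropy p {i, j} = jointEntropy p {i} + jointEntropy p {j}) :
    ∀ v w, marg2 p i j v w = marg1 p i v * marg1 p j w := by
  have hSi : ∑ v, marg1 p i v * Real.log (marg1 p i v)
      = ∑ v, ∑ w, marg2 p i j v w * Real.log (marg1 p i v) := by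
    refine Finset.sum_congr rfl fun v _ => ?_
    rw [← sum_marg2_right p i j v, Finset.sum_mul]
  have hSj : ∑ w, marg1 p j w * Real.log (marg1 p j w)
      = ∑ v, ∑ w, marg2 p i j v w * Real.log (marg1 p j w) := by
    rw [Finset.sum_comm]
    refine Finset.sum_congr rfl fun w _ => ?_
    rw [← sum_marg2_left p i j w, Finset.sum_mul]
  have heq2 : ∑ v, ∑ w, marg2 p i j v w * Real.log (marg2 p i j v w)
      = ∑ v, ∑ w, marg2 p i j v w * Real.log (marg1 p i v * marg1 p j w) := by
    have h1 := hH
    rw [jointEntropy_pair, jointEntropy_single, jointEntropy_single] at h1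
    have h2 : ∑ v, ∑ w, marg2 p i j v w * Real.log (marg2 p i j v w)
        = (∑ v, marg1 p i v * Real.log (marg1 p i v))
          + ∑ w, marg1 p j w * Real.log (marg1 p j w) := by linarith
    rw [h2, hSi, hSj, ← Finset.sum_add_distrib]
    refine Finset.sum_congr rfl fun v _ => ?_
    rw [← Finset.sum_add_distrib]
    refine Finset.sum_congr rfl fun w _ => ?_
    rw [Real.log_mul (hpos i v).ne' (hpos j w).ne']
    ring
  have hgibbs := gibbs_eq (fun vw : Fin (m i) × Fin (m j) => marg2 p i j vw.1 vw.2)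
      (fun vw => marg1 p i vw.1 * marg1 p j vw.2)
      (fun vw => marg2_nonneg p hp i j vw.1 vw.2)
      (fun vw => mul_pos (hpos i vw.1) (hpos j vw.2))
      (by rw [Fintype.sum_prod_type]
          simp_rw [sum_marg2_right]
          exact sum_marg1 p hps i)
      (by rw [Fintype.sum_prod_type]
          simp_rw [← Finset.mul_sum, sum_marg1 p hps j, mul_one]
          exact sum_marg1 p hps i)
      (by rw [Fintype.sum_prod_type, Fintype.sum_prod_type]
          exact heq2)
  intro v w
  exact hgibbs (v, w)

/-- If `marg2 p i j v w > 0`, there is a support point with the given coordinates. -/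
lemma exists_supp (hp : ∀ x, 0 ≤ p x) {i j : Fin n} {v : Fin (m i)} {w : Fin (m j)}
    (hpos2 : 0 < marg2 p i j v w) : ∃ z, 0 < p z ∧ z i = v ∧ z j = w := by
  by_contra h
  push_neg at h
  have : marg2 p i j v w = 0 := by
    refine Finset.sum_eq_zero fun z _ => ?_
    by_cases hc : z i = v ∧ z j = w
    · rw [if_pos hc]
      rcases eq_or_lt_of_le (hp z) with h0 | h0
      · exact h0.symm
      · exact absurd hc.2 (h z h0 hc.1)
    · rw [if_neg hc]
  rw [this] at hpos2
  exact lt_irrefl 0 hpos2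

end Aux

/-- If the entropy function of `(X1,X2,X3,X4)` equals `a·r(U_{2,4}) + b·r(U^{123}_{2,3})`
with `a, b ≥ 0`, then `X1, X2, X3` are each uniform, their alphabets have a common
size, and `a + b = log` of that size. -/
theorem statement6 {m : Fin 4 → ℕ} (p : (∀ i, Fin (m i)) → ℝ)
    (hpmf : IsPMF p)
    (hpos : ∀ (i : Fin 4) (x : Fin (m i)), 0 < marg1 p i x)
    (a b : ℝ) (ha : 0 ≤ a) (hb : 0 ≤ b)
    (hEnt : ∀ A : Finset (Fin 4), jointEntropy p A = a * r24 A + b * rU23_123 A) :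
    (∀ i : Fin 4, i ≠ 3 → ∀ x : Fin (m i), marg1 p i x = (m i : ℝ)⁻¹) ∧
    m 0 = m 1 ∧ m 1 = m 2 ∧ a + b = Real.log (m 0) := by
  obtain ⟨hp, hps⟩ := hpmf
  -- rank values
  have hr1 : ∀ i : Fin 4, i ∈ ({0, 1, 2} : Finset (Fin 4)) →
      jointEntropy p {i} = a + b := by
    intro i hi
    rw [hEnt]
    have hc : r24 {i} = 1 := by
      rw [r24]; norm_num
    have hc2 : rU23_123 {i} = 1 := by
      rw [rU23_123]
      have : ({i} : Finset (Fin 4)) ∩ {0, 1, 2} = {i} := by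
        fin_cases hi <;> decide
      rw [this]; norm_num
    rw [hc, hc2]; ring
  have hrp : ∀ i j : Fin 4, i ∈ ({0, 1, 2} : Finset (Fin 4)) →
      j ∈ ({0, 1, 2} : Finset (Fin 4)) → i ≠ j →
      jointEntropy p {i, j} = 2 * a + 2 * b := by
    intro i j hi hj hij
    rw [hEnt]
    have hc : r24 {i, j} = 2 := by
      rw [r24, Finset.card_insert_of_notMem (by simpa using hij), Finset.card_singleton]
      norm_num
    have hc2 : rU23_123 {i, j} = 2 := by
      rw [rU23_123]
      have : ({i, j} : Finset (Fin 4)) ∩ {0, 1, 2} = {i, j} := by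
        fin_cases hi <;> fin_cases hj <;> first | (exfalso; exact hij (by rfl)) | decide
      rw [this, Finset.card_insert_of_notMem (by simpa using hij), Finset.card_singleton]
      norm_num
    rw [hc, hc2]; ring
  have hrt : jointEntropy p {0, 1, 2} = 2 * a + 2 * b := by
    rw [hEnt]
    have hc : r24 {0, 1, 2} = 2 := by
      rw [r24, show (({0, 1, 2} : Finset (Fin 4))).card = 3 from by decide]; norm_num
    have hc2 : rU23_123 {0, 1, 2} = 2 := by
      rw [rU23_123]
      have : ({0, 1, 2} : Finset (Fin 4)) ∩ {0, 1, 2} = {0, 1, 2} := by decide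
      rw [this, show (({0, 1, 2} : Finset (Fin 4))).card = 3 from by decide]; norm_num
    rw [hc, hc2]; ring
  -- independence of the three pairs
  have hind : ∀ i j : Fin 4, i ∈ ({0, 1, 2} : Finset (Fin 4)) →
      j ∈ ({0, 1, 2} : Finset (Fin 4)) → i ≠ j →
      ∀ v w, marg2 p i j v w = marg1 p i v * marg1 p j w := by
    intro i j hi hj hij
    refine indep p hp hps hpos i j ?_
    rw [hrp i j hi hj hij, hr1 i hi, hr1 j hj]; ring
  -- determinism of each coordinate given the other two
  have hdet : ∀ i j : Fin 4, i ≠ j → ({i, j} : Finset (Fin 4)) ⊆ {0, 1, 2} →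
      ∀ x z, 0 < p x → 0 < p z → (∀ k ∈ ({i, j} : Finset (Fin 4)), z k = x k) →
      ∀ k ∈ ({0, 1, 2} : Finset (Fin 4)), z k = x k := by
    intro i j hij hsub
    refine support_det p hp hsub (cond_eq p hp hsub ?_)
    rw [hrt]
    have hi : i ∈ ({0, 1, 2} : Finset (Fin 4)) := hsub (by simp)
    have hj : j ∈ ({0, 1, 2} : Finset (Fin 4)) := hsub (by simp)
    exact (hrp i j hi hj hij).symm
  -- specialized determinism statements
  have det2' : ∀ x z, 0 < p x → 0 < p z → z 0 = x 0 → z 1 = x 1 → z 2 = x 2 := by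
    intro x z hx hz h0 h1
    refine hdet 0 1 (by decide) (by decide) x z hx hz ?_ 2 (by decide)
    intro k hk; fin_cases hk <;> assumption
  have det0' : ∀ x z, 0 < p x → 0 < p z → z 1 = x 1 → z 2 = x 2 → z 0 = x 0 := by
    intro x z hx hz h1 h2
    refine hdet 1 2 (by decide) (by decide) x z hx hz ?_ 0 (by decide)
    intro k hk; fin_cases hk <;> assumption
  have det1' : ∀ x z, 0 < p x → 0 < p z → z 0 = x 0 → z 2 = x 2 → z 1 = x 1 := by
    intro x z hx hz h0 h2
    refine hdet 0 2 (by decide) (by decide) x z hx hz ?_ 1 (by decide)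
    intro k hk; fin_cases hk <;> assumption
  -- key computation at a support point
  have key : ∀ z, 0 < p z →
      marg1 p 0 (z 0) = marg1 p 2 (z 2) ∧ marg1 p 1 (z 1) = marg1 p 2 (z 2) := by
    intro z hz
    have c01 : marg2 p 0 1 (z 0) (z 1)
        = ∑ w : ∀ i, Fin (m i), if w 0 = z 0 ∧ w 1 = z 1 ∧ w 2 = z 2 then p w else 0 := by
      rw [marg2]
      refine Finset.sum_congr rfl fun w _ => ?_
      rcases eq_or_lt_of_le (hp w) with h0 | h0
      · rw [← h0]; simp
      · by_cases hc : w 0 = z 0 ∧ w 1 = z 1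
        · rw [if_pos hc, if_pos ⟨hc.1, hc.2, det2' z w hz h0 hc.1 hc.2⟩]
        · rw [if_neg hc, if_neg (fun hcc => hc ⟨hcc.1, hcc.2.1⟩)]
    have c12 : marg2 p 1 2 (z 1) (z 2)
        = ∑ w : ∀ i, Fin (m i), if w 0 = z 0 ∧ w 1 = z 1 ∧ w 2 = z 2 then p w else 0 := by
      rw [marg2]
      refine Finset.sum_congr rfl fun w _ => ?_
      rcases eq_or_lt_of_le (hp w) with h0 | h0
      · rw [← h0]; simp
      · by_cases hc : w 1 = z 1 ∧ w 2 = z 2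
        · rw [if_pos hc, if_pos ⟨det0' z w hz h0 hc.1 hc.2, hc.1, hc.2⟩]
        · rw [if_neg hc, if_neg (fun hcc => hc ⟨hcc.2.1, hcc.2.2⟩)]
    have c02 : marg2 p 0 2 (z 0) (z 2)
        = ∑ w : ∀ i, Fin (m i), if w 0 = z 0 ∧ w 1 = z 1 ∧ w 2 = z 2 then p w else 0 := by
      rw [marg2]
      refine Finset.sum_congr rfl fun w _ => ?_
      rcases eq_or_lt_of_le (hp w) with h0 | h0
      · rw [← h0]; simp
      · by_cases hc : w 0 = z 0 ∧ w 2 = z 2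
        · rw [if_pos hc, if_pos ⟨hc.1, det1' z w hz h0 hc.1 hc.2, hc.2⟩]
        · rw [if_neg hc, if_neg (fun hcc => hc ⟨hcc.1, hcc.2.2⟩)]
    have e1 : marg1 p 0 (z 0) * marg1 p 1 (z 1) = marg1 p 1 (z 1) * marg1 p 2 (z 2) := by
      rw [← hind 0 1 (by decide) (by decide) (by decide),
        ← hind 1 2 (by decide) (by decide) (by decide), c01, c12]
    have e2 : marg1 p 0 (z 0) * marg1 p 2 (z 2) = marg1 p 0 (z 0) * marg1 p 1 (z 1) := by
      rw [← hind 0 2 (by decide) (by decide) (by decide),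
        ← hind 0 1 (by decide) (by decide) (by decide), c02, c01]
    have k2 : marg1 p 2 (z 2) = marg1 p 1 (z 1) :=
      mul_left_cancel₀ (hpos 0 (z 0)).ne' e2
    rw [mul_comm] at e1
    have k1 : marg1 p 0 (z 0) = marg1 p 2 (z 2) :=
      mul_left_cancel₀ (hpos 1 (z 1)).ne' e1
    exact ⟨k1, k2.symm⟩
  -- a global support point
  obtain ⟨z₀, hz₀⟩ : ∃ z, 0 < p z := by
    obtain ⟨z, _, hz⟩ := Finset.exists_ne_zero_of_sum_ne_zero
      (by rw [hps]; exact one_ne_zero : ∑ x, p x ≠ 0)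
    exact ⟨z, lt_of_le_of_ne (hp z) (Ne.symm hz)⟩
  have hconst0 : ∀ (v : Fin (m 0)) (c : Fin (m 2)), marg1 p 0 v = marg1 p 2 c := by
    intro v c
    have hpos2 : 0 < marg2 p 0 2 v c := by
      rw [hind 0 2 (by decide) (by decide) (by decide)]
      exact mul_pos (hpos 0 v) (hpos 2 c)
    obtain ⟨z, hz, h0, h2⟩ := exists_supp p hp hpos2
    have h := (key z hz).1
    rwa [h0, h2] at h
  have hconst1 : ∀ (w : Fin (m 1)) (c : Fin (m 2)), marg1 p 1 w = marg1 p 2 c := by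
    intro w c
    have hpos2 : 0 < marg2 p 1 2 w c := by
      rw [hind 1 2 (by decide) (by decide) (by decide)]
      exact mul_pos (hpos 1 w) (hpos 2 c)
    obtain ⟨z, hz, h1, h2⟩ := exists_supp p hp hpos2
    have h := (key z hz).2
    rwa [h1, h2] at h
  set K := marg1 p 2 (z₀ 2) with hKdef
  have hm0 : ∀ v, marg1 p 0 v = K := fun v => hconst0 v (z₀ 2)
  have hm1 : ∀ w, marg1 p 1 w = K := fun w => hconst1 w (z₀ 2)
  have hm2 : ∀ c, marg1 p 2 c = K := fun c =>
    (hconst0 (z₀ 0) c).symm.trans (hconst0 (z₀ 0) (z₀ 2))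
  have hK : 0 < K := hpos 2 (z₀ 2)
  have hsumK : ∀ i : Fin 4, (∀ v : Fin (m i), marg1 p i v = K) → (m i : ℝ) * K = 1 := by
    intro i hi
    have h := sum_marg1 p hps i
    rwa [Finset.sum_congr rfl (fun v _ => hi v), Finset.sum_const, card_univ,
      Fintype.card_fin, nsmul_eq_mul] at h
  have s0 := hsumK 0 hm0
  have s1 := hsumK 1 hm1
  have s2 := hsumK 2 hm2
  have hKinv : ∀ i : Fin 4, (m i : ℝ) * K = 1 → K = (m i : ℝ)⁻¹ := by
    intro i h
    exact eq_inv_of_mul_eq_one_right h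
  have hm0ne : (m 0 : ℝ) ≠ 0 := by
    intro h0; rw [h0, zero_mul] at s0; norm_num at s0
  have hcast01 : (m 0 : ℝ) = (m 1 : ℝ) := mul_right_cancel₀ hK.ne' (s0.trans s1.symm)
  have hcast12 : (m 1 : ℝ) = (m 2 : ℝ) := mul_right_cancel₀ hK.ne' (s1.trans s2.symm)
  have hmar0 : ∀ v, marg1 p 0 v = ((m 0 : ℝ))⁻¹ := fun v => (hm0 v).trans (hKinv 0 s0)
  have hmar1 : ∀ v, marg1 p 1 v = ((m 1 : ℝ))⁻¹ := fun v => (hm1 v).trans (hKinv 1 s1)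
  have hmar2 : ∀ v, marg1 p 2 v = ((m 2 : ℝ))⁻¹ := fun v => (hm2 v).trans (hKinv 2 s2)
  have hEnt0 : jointEntropy p {0} = Real.log (m 0) := by
    rw [jointEntropy_single,
      Finset.sum_congr rfl (fun v _ => by rw [hmar0 v]),
      Finset.sum_const, card_univ, Fintype.card_fin, nsmul_eq_mul, Real.log_inv,
      ← mul_assoc, mul_inv_cancel₀ hm0ne]
    ring
  refine ⟨?_, ?_, ?_, ?_⟩
  · intro i hi x
    fin_cases i
    · exact hmar0 x
    · exact hmar1 x
    · exact hmar2 x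
    · exact absurd rfl hi
  · exact_mod_cast hcast01
  · exact_mod_cast hcast12
  · exact ((hr1 0 (by decide)).symm).trans hEnt0
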